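/- Let f: Ω → ℝ be α-Hölder and suppose λ > 0 and a strictly positive α-Hölder function h satisfy L_f h = λ h. Then for every shift-invariant Borel probability measure μ on Ω, h^s(μ) + ∫_Ω f dμ ≤ log λ. -/

import Mathlib

open MeasureTheory Filter
open scoped Classical
open scoped Topology
set_option linter.unusedSectionVars false

noncomputable section

namespace Paper

variable {A : Type*} [MetricSpace A] [CompactSpace A] [MeasurableSpace A] [BorelSpace A]

/-- The left shift `σ` on `Ω = Aᴺ`. -/
def shift (x : ℕ → A) : ℕ → A := fun n => x (n + 1)

/-- Prepend a symbol: `cons a x = (a, x₀, x₁, …)`. -/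
def cons (a : A) (x : ℕ → A) : ℕ → A := fun n =>
  match n with
  | 0 => a
  | n + 1 => x n

/-- The metric `d_Ω` on `Ω`. -/
def dOmega (x y : ℕ → A) : ℝ :=
  ∑' n : ℕ, (1 / 2 : ℝ) ^ (n + 1) * (dist (x n) (y n) / (1 + dist (x n) (y n)))

/-- `f` is `α`-Hölder with respect to `d_Ω`. -/
def IsHolder (α : ℝ) (f : (ℕ → A) → ℝ) : Prop :=
  ∃ C : ℝ, 0 ≤ C ∧ ∀ x y, |f x - f y| ≤ C * dOmega x y ^ α

/-- The Ruelle transfer operator with a priori measure `p`. -/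
def ruelle (p : Measure A) (f φ : (ℕ → A) → ℝ) : (ℕ → A) → ℝ :=
  fun x => ∫ a, Real.exp (f (cons a x)) * φ (cons a x) ∂p

/-- The normalized potential `f̄ = f + log h - log (h ∘ σ) - log λ`. -/
def fbar (f h : (ℕ → A) → ℝ) (lam : ℝ) : (ℕ → A) → ℝ :=
  fun x => f x + Real.log (h x) - Real.log (h (shift x)) - Real.log lam

/-- Projection on the first `n` coordinates. -/
def proj (n : ℕ) (x : ℕ → A) : Fin n → A := fun i => x i

/-- Relative entropy `H(μ|ν)` of two measures, with value `+∞` unless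
`μ ≪ ν` and the entropy integral is finite. -/
def relEnt {X : Type*} [MeasurableSpace X] (μ ν : Measure X) : EReal :=
  if μ ≪ ν ∧ Integrable (fun x => Real.log (μ.rnDeriv ν x).toReal) μ then
    ((∫ x, Real.log (μ.rnDeriv ν x).toReal ∂μ : ℝ) : EReal)
  else ⊤

/-- Relative entropy `H_{Λ_n}(μ|ν)` on the σ-algebra of the first `n` coordinates. -/
def relEntN (n : ℕ) (μ ν : Measure (ℕ → A)) : EReal :=
  relEnt (μ.map (proj n)) (ν.map (proj n))

/-- The entropy `H_{Λ_n}(μ) = -H_{Λ_n}(μ | pᴺ)` relative to the a priori measure `p`. -/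
def finEnt (p : Measure A) (μ : Measure (ℕ → A)) (n : ℕ) : EReal :=
  - relEnt (μ.map (proj n)) (Measure.pi fun _ : Fin n => p)

/-- The specific entropy `h^s(μ) = lim_n H_{Λ_n}(μ)/n` (defined as a `limsup`,
which coincides with the limit whenever the latter exists). -/
def specEnt (p : Measure A) (μ : Measure (ℕ → A)) : EReal :=
  Filter.atTop.limsup fun n : ℕ => ((n : ℝ)⁻¹ : EReal) * finEnt p μ n

/-- Birkhoff sum `S_n(f)`. -/
def birkhoff (n : ℕ) (f : (ℕ → A) → ℝ) (x : ℕ → A) : ℝ :=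
  ∑ i ∈ Finset.range n, f (shift^[i] x)

/-- The configuration `x_{Λ_n} y_{Λ_n^c}`. -/
def concatAt (n : ℕ) (x y : ℕ → A) : ℕ → A := fun i => if i < n then x i else y i

/-- Concatenation of a finite word with a configuration. -/
def wordCons (n : ℕ) (a : Fin n → A) (x : ℕ → A) : ℕ → A :=
  fun i => if h : i < n then a ⟨i, h⟩ else x (i - n)

/-- the summand of `dOmega` -/

def dterm (x y : ℕ → A) (n : ℕ) : ℝ :=
  (1 / 2 : ℝ) ^ (n + 1) * (dist (x n) (y n) / (1 + dist (x n) (y n)))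

lemma dOmega_eq_tsum (x y : ℕ → A) : dOmega x y = ∑' n, dterm x y n := rfl

lemma dterm_nonneg (x y : ℕ → A) (n : ℕ) : 0 ≤ dterm x y n := by
  unfold dterm; positivity

lemma dterm_le_geom (x y : ℕ → A) (n : ℕ) : dterm x y n ≤ (1/2:ℝ)^(n+1) := by
  unfold dterm
  have h1 : dist (x n) (y n) / (1 + dist (x n) (y n)) ≤ 1 := by
    rw [div_le_one (by positivity)]; linarith [dist_nonneg (x := x n) (y := y n)]
  nlinarith [pow_pos (by norm_num : (0:ℝ) < 1/2) (n+1)]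

lemma dterm_le_dist (x y : ℕ → A) (n : ℕ) : dterm x y n ≤ dist (x n) (y n) := by
  unfold dterm
  have h0 : (0:ℝ) ≤ dist (x n) (y n) := dist_nonneg
  have h1 : dist (x n) (y n) / (1 + dist (x n) (y n)) ≤ dist (x n) (y n) :=
    div_le_self h0 (by linarith)
  have h2 : (1/2:ℝ)^(n+1) ≤ 1 := pow_le_one₀ (by norm_num) (by norm_num)
  nlinarith [pow_pos (by norm_num : (0:ℝ) < 1/2) (n+1),
    div_nonneg h0 (by linarith : (0:ℝ) ≤ 1 + dist (x n) (y n))]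

lemma summable_geom_succ : Summable (fun n : ℕ => (1/2:ℝ)^(n+1)) := by
  simp only [pow_succ]
  exact (summable_geometric_of_lt_one (by norm_num) (by norm_num)).mul_right _

lemma tsum_geom_succ : ∑' n : ℕ, (1/2:ℝ)^(n+1) = 1 := by
  simp only [pow_succ]
  rw [tsum_mul_right, tsum_geometric_of_lt_one (by norm_num) (by norm_num)]
  norm_num

lemma summable_dterm (x y : ℕ → A) : Summable (dterm x y) :=
  Summable.of_nonneg_of_le (dterm_nonneg x y) (dterm_le_geom x y) summable_geom_succ

lemma dOmega_nonneg (x y : ℕ → A) : 0 ≤ dOmega x y :=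
  tsum_nonneg (dterm_nonneg x y)

lemma dOmega_comm (x y : ℕ → A) : dOmega x y = dOmega y x := by
  unfold dOmega; exact tsum_congr fun n => by rw [dist_comm]

lemma tsum_dterm_tail_le (x y : ℕ → A) (m : ℕ) :
    ∑' n : ℕ, dterm x y (n + m) ≤ (1/2:ℝ)^m := by
  have hsum : Summable (fun n => dterm x y (n + m)) :=
    (summable_nat_add_iff m).2 (summable_dterm x y)
  have hsum2 : Summable (fun n : ℕ => (1/2:ℝ)^(n+m+1)) := by
    have h := summable_geom_succ.mul_right ((1/2:ℝ)^m)
    exact Summable.congr h fun n => by ring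
  calc ∑' n : ℕ, dterm x y (n + m) ≤ ∑' n : ℕ, (1/2:ℝ)^(n+m+1) :=
        Summable.tsum_le_tsum (fun n => dterm_le_geom x y (n+m)) hsum hsum2
    _ = ∑' n : ℕ, (1/2:ℝ)^(n+1) * (1/2:ℝ)^m := tsum_congr fun n => by ring
    _ = (1/2:ℝ)^m := by rw [tsum_mul_right, tsum_geom_succ, one_mul]

lemma dOmega_split (x y : ℕ → A) (N : ℕ) :
    dOmega x y = (∑ n ∈ Finset.range N, dterm x y n) + ∑' n : ℕ, dterm x y (n + N) :=
  (Summable.sum_add_tsum_nat_add N (summable_dterm x y)).symm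

lemma dOmega_le_of_agree {x y : ℕ → A} {m : ℕ} (hag : ∀ k < m, x k = y k) :
    dOmega x y ≤ (1/2:ℝ)^m := by
  rw [dOmega_split x y m]
  have h1 : (∑ n ∈ Finset.range m, dterm x y n) = 0 := by
    apply Finset.sum_eq_zero
    intro n hn
    have := hag n (Finset.mem_range.1 hn)
    simp [dterm, this]
  rw [h1, zero_add]
  exact tsum_dterm_tail_le x y m

lemma dOmega_le_one (x y : ℕ → A) : dOmega x y ≤ 1 := by
  simpa using dOmega_le_of_agree (x := x) (y := y) (m := 0) (by omega)

lemma dOmega_le_sum (x y : ℕ → A) (N : ℕ) :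
    dOmega x y ≤ (∑ n ∈ Finset.range N, dist (x n) (y n)) + (1/2:ℝ)^N := by
  rw [dOmega_split x y N]
  exact add_le_add (Finset.sum_le_sum fun n _ => dterm_le_dist x y n)
    (tsum_dterm_tail_le x y N)

lemma dOmega_shift_le (x y : ℕ → A) : dOmega (shift x) (shift y) ≤ 2 * dOmega x y := by
  have h1 : ∀ n, dterm (shift x) (shift y) n = 2 * dterm x y (n+1) := by
    intro n; unfold dterm shift; ring
  have h2 : dOmega (shift x) (shift y) = 2 * ∑' n, dterm x y (n+1) := by
    rw [dOmega_eq_tsum, tsum_congr h1, tsum_mul_left]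
  rw [h2]
  have h3 : ∑' n, dterm x y (n+1) ≤ dOmega x y := by
    rw [dOmega_split x y 1]
    have : (0:ℝ) ≤ ∑ n ∈ Finset.range 1, dterm x y n :=
      Finset.sum_nonneg fun n _ => dterm_nonneg x y n
    linarith [le_refl (∑' n, dterm x y (n+1))]
  linarith

lemma tendsto_dOmega (x : ℕ → A) : Tendsto (fun y => dOmega x y) (𝓝 x) (𝓝 0) := by
  rw [NormedAddCommGroup.tendsto_nhds_zero]
  intro ε hε
  obtain ⟨N, hN⟩ : ∃ N : ℕ, (1/2:ℝ)^N < ε/2 :=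
    exists_pow_lt_of_lt_one (by positivity) (by norm_num)
  set δ : ℝ := ε / (2*(N+1)) with hδdef
  have hδ : 0 < δ := by positivity
  have hev : ∀ᶠ y in 𝓝 x, ∀ n ∈ Finset.range N, dist (y n) (x n) < δ := by
    rw [Finset.eventually_all]
    intro n _
    have hcont : Tendsto (fun y : ℕ → A => y n) (𝓝 x) (𝓝 (x n)) :=
      (continuous_apply n).tendsto x
    exact hcont (Metric.ball_mem_nhds (x n) hδ)
  filter_upwards [hev] with y hy
  have hnn := dOmega_nonneg x y
  rw [Real.norm_eq_abs, abs_of_nonneg hnn]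
  have hb : dOmega x y ≤ (∑ n ∈ Finset.range N, dist (x n) (y n)) + (1/2:ℝ)^N :=
    dOmega_le_sum x y N
  have hs : (∑ n ∈ Finset.range N, dist (x n) (y n)) ≤ N * δ := by
    calc (∑ n ∈ Finset.range N, dist (x n) (y n))
        ≤ ∑ _n ∈ Finset.range N, δ :=
          Finset.sum_le_sum fun n hn => by rw [dist_comm]; exact (hy n hn).le
      _ = N * δ := by simp [mul_comm]
  have hNδ : (N:ℝ) * δ ≤ ε/2 := by
    rw [hδdef]
    have h : (N:ℝ) ≤ (N:ℝ)+1 := by linarith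
    calc (N:ℝ) * (ε/(2*(N+1))) ≤ ((N:ℝ)+1) * (ε/(2*(N+1))) :=
          mul_le_mul_of_nonneg_right h (by positivity)
      _ = ε/2 := by field_simp
  linarith

lemma continuous_of_holder {α : ℝ} (hα0 : 0 < α) {f : (ℕ → A) → ℝ}
    (hf : IsHolder α f) : Continuous f := by
  obtain ⟨C, hC0, hC⟩ := hf
  rw [continuous_iff_continuousAt]
  intro x
  rw [ContinuousAt, tendsto_iff_dist_tendsto_zero]
  have hbound : ∀ y, dist (f y) (f x) ≤ C * dOmega x y ^ α := by
    intro y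
    rw [Real.dist_eq, abs_sub_comm]
    exact hC x y
  have hlim : Tendsto (fun y => C * dOmega x y ^ α) (𝓝 x) (𝓝 0) := by
    have h1 : ContinuousAt (fun t : ℝ => t ^ α) 0 :=
      Real.continuousAt_rpow_const 0 α (Or.inr hα0.le)
    have h2 : Tendsto (fun y => dOmega x y ^ α) (𝓝 x) (𝓝 0) := by
      have := h1.tendsto.comp (tendsto_dOmega x)
      simpa [Function.comp_def, Real.zero_rpow hα0.ne'] using this
    simpa using h2.const_mul C
  exact squeeze_zero (fun y => dist_nonneg) hbound hlim

lemma bounded_of_holder {α : ℝ} (hα0 : 0 < α) {f : (ℕ → A) → ℝ}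
    (x₀ : ℕ → A) (C : ℝ) (hC0 : 0 ≤ C) (hC : ∀ x y, |f x - f y| ≤ C * dOmega x y ^ α) :
    ∀ x, |f x| ≤ |f x₀| + C := by
  intro x
  have h1 : |f x - f x₀| ≤ C * dOmega x x₀ ^ α := hC x x₀
  have h2 : dOmega x x₀ ^ α ≤ 1 :=
    Real.rpow_le_one (dOmega_nonneg x x₀) (dOmega_le_one x x₀) hα0.le
  have h3 : C * dOmega x x₀ ^ α ≤ C := by nlinarith
  calc |f x| = |f x₀ + (f x - f x₀)| := by ring_nf
    _ ≤ |f x₀| + |f x - f x₀| := abs_add_le _ _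
    _ ≤ |f x₀| + C := by linarith

lemma young_ineq (s t : ℝ) (hs : 0 ≤ s) :
    s * t ≤ s * Real.log s - s + Real.exp t := by
  rcases eq_or_lt_of_le hs with h | h
  · simp [← h]; positivity
  · have h1 : t - Real.log s + 1 ≤ Real.exp (t - Real.log s) := Real.add_one_le_exp _
    have h2 : Real.exp (t - Real.log s) = Real.exp t / s := by
      rw [Real.exp_sub, Real.exp_log h]
    rw [h2] at h1
    have h3 := mul_le_mul_of_nonneg_left h1 hs
    rw [mul_div_cancel₀ _ (ne_of_gt h)] at h3
    nlinarith

lemma log_lipschitz {c u v : ℝ} (hc : 0 < c) (hu : c ≤ u) (hv : c ≤ v) :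
    |Real.log u - Real.log v| ≤ c⁻¹ * |u - v| := by
  have key : ∀ a b : ℝ, c ≤ a → c ≤ b → b ≤ a →
      Real.log a - Real.log b ≤ c⁻¹ * |a - b| := by
    intro a b ha hb hba
    have hb0 : 0 < b := lt_of_lt_of_le hc hb
    have ha0 : 0 < a := lt_of_lt_of_le hc ha
    have h1 : Real.log a - Real.log b = Real.log (a / b) := (Real.log_div ha0.ne' hb0.ne').symm
    have h2 : Real.log (a / b) ≤ a / b - 1 := Real.log_le_sub_one_of_pos (by positivity)
    have h3 : a / b - 1 = (a - b) / b := by field_simp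
    have h4 : (a - b) / b ≤ (a - b) / c := by
      apply div_le_div_of_nonneg_left (by linarith) hc hb
    have h5 : (a - b) / c = c⁻¹ * |a - b| := by
      rw [abs_of_nonneg (by linarith)]; ring
    linarith
  rcases le_total v u with hvu | huv
  · rw [abs_of_nonneg (by rw [sub_nonneg]; exact Real.log_le_log (lt_of_lt_of_le hc hv) hvu)]
    exact key u v hu hv hvu
  · rw [abs_of_nonpos (by rw [sub_nonpos]; exact Real.log_le_log (lt_of_lt_of_le hc hu) huv),
      abs_sub_comm, neg_sub]
    exact key v u hv hu huv

lemma integrable_of_bdd {X : Type*} [MeasurableSpace X] {μ : Measure X} [IsFiniteMeasure μ]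
    {u : X → ℝ} (hm : Measurable u) {B : ℝ} (hb : ∀ x, |u x| ≤ B) : Integrable u μ :=
  Integrable.mono' (integrable_const B) hm.aestronglyMeasurable
    (ae_of_all _ fun x => by rw [Real.norm_eq_abs]; exact hb x)

/-- Gibbs / Donsker–Varadhan inequality. -/

lemma gibbs_ineq {X : Type*} [MeasurableSpace X] (μ ν : Measure X)
    [IsProbabilityMeasure μ] [IsProbabilityMeasure ν]
    (hac : μ ≪ ν)
    (hint : Integrable (fun x => Real.log (μ.rnDeriv ν x).toReal) μ)
    {g : X → ℝ} (hg : Measurable g) {B : ℝ} (hB : ∀ x, |g x| ≤ B)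
    (hZ : ∫ x, Real.exp (g x) ∂ν = 1) :
    ∫ x, g x ∂μ ≤ ∫ x, Real.log (μ.rnDeriv ν x).toReal ∂μ := by
  set φ : X → ℝ := fun x => (μ.rnDeriv ν x).toReal with hφdef
  have hφm : Measurable φ := (Measure.measurable_rnDeriv μ ν).ennreal_toReal
  have hφ0 : ∀ x, 0 ≤ φ x := fun x => ENNReal.toReal_nonneg
  have hgμ : ∫ x, g x ∂μ = ∫ x, φ x * g x ∂ν := by
    rw [← MeasureTheory.integral_rnDeriv_smul hac]; simp [hφdef]
  have hlogμ : ∫ x, Real.log (φ x) ∂μ = ∫ x, φ x * Real.log (φ x) ∂ν := by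
    rw [← MeasureTheory.integral_rnDeriv_smul hac (f := fun x => Real.log (φ x))]; simp [hφdef]
  have Iφ : Integrable φ ν := Measure.integrable_toReal_rnDeriv
  have Iφg : Integrable (fun x => φ x * g x) ν := by
    have := Iφ.bdd_mul (hg.aestronglyMeasurable)
      (ae_of_all _ fun x => by rw [Real.norm_eq_abs]; exact hB x)
    exact this.congr (ae_of_all _ fun x => by ring)
  have Iexp : Integrable (fun x => Real.exp (g x)) ν := by
    apply integrable_of_bdd (hg.exp)
    intro x
    rw [abs_of_pos (Real.exp_pos _)]
    exact Real.exp_le_exp.2 (le_of_abs_le (hB x))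
  have Iφlog : Integrable (fun x => φ x * Real.log (φ x)) ν := by
    have h := (MeasureTheory.integrable_rnDeriv_smul_iff hac
      (f := fun x => Real.log (φ x))).2 hint
    exact h.congr (ae_of_all _ fun x => by simp [hφdef])
  have hpt : ∀ x, φ x * g x ≤ φ x * Real.log (φ x) - φ x + Real.exp (g x) :=
    fun x => young_ineq (φ x) (g x) (hφ0 x)
  have hmono : ∫ x, φ x * g x ∂ν ≤ ∫ x, (φ x * Real.log (φ x) - φ x + Real.exp (g x)) ∂ν :=
    integral_mono Iφg (((Iφlog.sub Iφ)).add Iexp) hpt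
  have hφint : ∫ x, φ x ∂ν = 1 := by
    rw [hφdef]
    simp [Measure.integral_toReal_rnDeriv hac]
  have Isub : Integrable (fun x => φ x * Real.log (φ x) - φ x) ν := Iφlog.sub Iφ
  have hsplit : ∫ x, (φ x * Real.log (φ x) - φ x + Real.exp (g x)) ∂ν
      = ∫ x, φ x * Real.log (φ x) ∂ν - ∫ x, φ x ∂ν + ∫ x, Real.exp (g x) ∂ν := by
    rw [integral_add Isub Iexp, integral_sub Iφlog Iφ]
  rw [hgμ, hφdef]
  calc ∫ x, (μ.rnDeriv ν x).toReal * g x ∂ν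
      ≤ ∫ x, φ x * Real.log (φ x) ∂ν - ∫ x, φ x ∂ν + ∫ x, Real.exp (g x) ∂ν := by
        rw [← hsplit]; exact hmono
    _ = ∫ x, φ x * Real.log (φ x) ∂ν := by rw [hφint, hZ]; ring
    _ = ∫ x, Real.log (μ.rnDeriv ν x).toReal ∂μ := hlogμ.symm

lemma shift_cons (a : A) (x : ℕ → A) : shift (cons a x) = x := rfl

lemma measurable_shift : Measurable (shift : (ℕ → A) → (ℕ → A)) :=
  measurable_pi_lambda _ fun n => measurable_pi_apply (n + 1)

lemma measurable_shift_iterate (i : ℕ) :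
    Measurable (fun x : ℕ → A => shift^[i] x) := by
  induction i with
  | zero => exact measurable_id
  | succ k ih =>
    have : (fun x : ℕ → A => shift^[k+1] x) = (fun x => shift^[k] (shift x)) := by
      funext x; rw [Function.iterate_succ_apply]
    rw [this]
    exact ih.comp measurable_shift

lemma continuous_shift : Continuous (shift : (ℕ → A) → (ℕ → A)) :=
  continuous_pi fun n => continuous_apply (n + 1)

lemma measurable_birkhoff {g : (ℕ → A) → ℝ} (hg : Measurable g) (n : ℕ) :
    Measurable (birkhoff n g) := by
  unfold birkhoff
  exact Finset.measurable_sum _ fun i _ => hg.comp (measurable_shift_iterate i)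

lemma abs_birkhoff_le {g : (ℕ → A) → ℝ} {B : ℝ} (hB : ∀ x, |g x| ≤ B) (n : ℕ)
    (x : ℕ → A) : |birkhoff n g x| ≤ n * B := by
  calc |birkhoff n g x| ≤ ∑ i ∈ Finset.range n, |g (shift^[i] x)| :=
        Finset.abs_sum_le_sum_abs _ _
    _ ≤ ∑ _i ∈ Finset.range n, B := Finset.sum_le_sum fun i _ => hB _
    _ = n * B := by simp [mul_comm]

lemma birkhoff_succ' (n : ℕ) (g : (ℕ → A) → ℝ) (x : ℕ → A) :
    birkhoff (n+1) g x = g x + birkhoff n g (shift x) := by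
  unfold birkhoff
  rw [Finset.sum_range_succ']
  simp only [Function.iterate_succ_apply, Function.iterate_zero_apply]
  ring

lemma shift_iterate_apply (i : ℕ) (x : ℕ → A) (k : ℕ) : shift^[i] x k = x (k + i) := by
  induction i generalizing x with
  | zero => rfl
  | succ m ih =>
    rw [Function.iterate_succ_apply, ih]
    show x (k + m + 1) = x (k + (m + 1))
    congr 1

section Ruelle

variable (p : Measure A) [IsProbabilityMeasure p]
variable {f h : (ℕ → A) → ℝ} {lam : ℝ}

/-- The normalized transfer operator applied to `1` is `1`. -/

lemma ruelle_fbar_one (hlam : 0 < lam) (hpos : ∀ x, 0 < h x)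
    (heig : ∀ x, ruelle p f h x = lam * h x) (x : ℕ → A) :
    ∫ a, Real.exp (fbar f h lam (cons a x)) ∂p = 1 := by
  have hrw : ∀ a : A, Real.exp (fbar f h lam (cons a x))
      = (Real.exp (f (cons a x)) * h (cons a x)) * (lam * h x)⁻¹ := by
    intro a
    unfold fbar
    rw [shift_cons]
    rw [Real.exp_sub, Real.exp_sub, Real.exp_add, Real.exp_log (hpos _),
      Real.exp_log (hpos x), Real.exp_log hlam]
    field_simp
  rw [integral_congr_ae (ae_of_all _ hrw), integral_mul_const]
  have : ∫ a, Real.exp (f (cons a x)) * h (cons a x) ∂p = lam * h x := heig x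
  rw [this, mul_inv_cancel₀ (ne_of_gt (mul_pos hlam (hpos x)))]

lemma measurable_consWord (n : ℕ) (y : ℕ → A) :
    Measurable (fun q : A × (Fin n → A) => cons q.1 (wordCons n q.2 y)) := by
  apply measurable_pi_lambda
  intro i
  match i with
  | 0 => exact measurable_fst
  | (i+1) =>
    show Measurable fun q : A × (Fin n → A) => wordCons n q.2 y i
    by_cases hi : i < n
    · simp only [wordCons, dif_pos hi]
      exact (measurable_pi_apply _).comp measurable_snd
    · simp only [wordCons, dif_neg hi]
      exact measurable_const

lemma wordCons_succ (n : ℕ) (y : ℕ → A) (w : Fin (n+1) → A) :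
    wordCons (n+1) w y = cons (w 0) (wordCons n (fun j => w j.succ) y) := by
  funext i
  match i with
  | 0 => simp [wordCons, cons]
  | (i+1) =>
    show wordCons (n+1) w y (i+1) = wordCons n (fun j => w j.succ) y i
    by_cases hi : i < n
    · rw [wordCons, dif_pos (by omega : i+1 < n+1), wordCons, dif_pos hi]
      rfl
    · rw [wordCons, dif_neg (by omega), wordCons, dif_neg hi]
      congr 1
      omega

lemma partition_one (hlam : 0 < lam) (hpos : ∀ x, 0 < h x)
    (heig : ∀ x, ruelle p f h x = lam * h x)
    (hfm : Measurable (fbar f h lam)) {B : ℝ}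
    (hB : ∀ x, |fbar f h lam x| ≤ B) :
    ∀ (n : ℕ) (y : ℕ → A),
      ∫ w, Real.exp (birkhoff n (fbar f h lam) (wordCons n w y))
        ∂(Measure.pi fun _ : Fin n => p) = 1 := by
  intro n
  induction n with
  | zero =>
    intro y
    simp [birkhoff]
  | succ n ih =>
    intro y
    set fb := fbar f h lam with hfb
    set Pn : Measure (Fin n → A) := Measure.pi fun _ : Fin n => p with hPn
    set e := MeasurableEquiv.piFinSuccAbove (fun _ : Fin (n+1) => A) 0 with he_def
    set G : A × (Fin n → A) → ℝ :=
      fun q => Real.exp (birkhoff (n+1) fb (cons q.1 (wordCons n q.2 y))) with hG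
    have he : ∀ w : Fin (n+1) → A, e w = (w 0, fun j => w j.succ) := by
      intro w
      rw [he_def]
      simp [MeasurableEquiv.piFinSuccAbove, Fin.zero_succAbove]
      rfl
    have hFG : ∀ w : Fin (n+1) → A,
        Real.exp (birkhoff (n+1) fb (wordCons (n+1) w y)) = G (e w) := by
      intro w
      rw [he w, hG]
      simp only [wordCons_succ n y w]
    have hGm : Measurable G :=
      (Real.measurable_exp.comp ((measurable_birkhoff hfm (n+1)).comp
        (measurable_consWord n y)))
    have hGb : ∀ q, |G q| ≤ Real.exp ((n+1) * B) := by
      intro q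
      rw [hG]
      rw [abs_of_pos (Real.exp_pos _)]
      refine Real.exp_le_exp.2 (le_of_abs_le ?_)
      have := abs_birkhoff_le hB (n+1) (cons q.1 (wordCons n q.2 y))
      push_cast at this ⊢
      linarith
    have hGint : Integrable G (p.prod Pn) := integrable_of_bdd hGm hGb
    have MP : MeasurePreserving e (Measure.pi fun _ : Fin (n+1) => p)
        (p.prod Pn) := measurePreserving_piFinSuccAbove (fun _ : Fin (n+1) => p) 0
    calc ∫ w, Real.exp (birkhoff (n+1) fb (wordCons (n+1) w y))
          ∂(Measure.pi fun _ : Fin (n+1) => p)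
        = ∫ w, G (e w) ∂(Measure.pi fun _ : Fin (n+1) => p) := by
          exact integral_congr_ae (ae_of_all _ hFG)
      _ = ∫ q, G q ∂(p.prod Pn) :=
          MP.integral_comp e.measurableEmbedding G
      _ = ∫ v, (∫ a, G (a, v) ∂p) ∂Pn := integral_prod_symm G hGint
      _ = ∫ v, Real.exp (birkhoff n fb (wordCons n v y)) ∂Pn := by
          apply integral_congr_ae (ae_of_all _ _)
          intro v
          have hsplit : ∀ a : A,
              G (a, v) = Real.exp (fb (cons a (wordCons n v y)))
                * Real.exp (birkhoff n fb (wordCons n v y)) := by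
            intro a
            rw [hG]
            simp only
            rw [birkhoff_succ', shift_cons, Real.exp_add]
          rw [integral_congr_ae (ae_of_all _ hsplit), integral_mul_const,
            ruelle_fbar_one p hlam hpos heig, one_mul]
      _ = 1 := ih y

end Ruelle

lemma half_pow_rpow (α : ℝ) (m : ℕ) : ((1/2:ℝ)^m) ^ α = ((1/2:ℝ) ^ α) ^ m := by
  have h0 : (0:ℝ) ≤ 1/2 := by norm_num
  rw [← Real.rpow_natCast (1/2:ℝ) m, ← Real.rpow_mul h0, mul_comm,
    Real.rpow_mul h0, Real.rpow_natCast]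

lemma geom_tail_sum {r : ℝ} (hr0 : 0 ≤ r) (hr1 : r < 1) (n : ℕ) :
    ∑ i ∈ Finset.range n, r^(n-i) ≤ r * (1-r)⁻¹ := by
  have h1 := Finset.sum_range_reflect (fun j => r^(j+1)) n
  have h2 : ∑ j ∈ Finset.range n, r^(n-j) = ∑ j ∈ Finset.range n, r^(j+1) := by
    rw [← h1]
    apply Finset.sum_congr rfl
    intro j hj
    have := Finset.mem_range.1 hj
    congr 1
    omega
  have h3 : ∑ j ∈ Finset.range n, r^(j+1) = (∑ j ∈ Finset.range n, r^j) * r := by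
    rw [Finset.sum_mul]
    exact Finset.sum_congr rfl fun j _ => by rw [pow_succ]
  have h4 : ∑ j ∈ Finset.range n, r^j ≤ (1-r)⁻¹ := by
    have h5 := Summable.sum_le_tsum (Finset.range n) (fun i _ => pow_nonneg hr0 i)
      (summable_geometric_of_lt_one hr0 hr1)
    rwa [tsum_geometric_of_lt_one hr0 hr1] at h5
  rw [h2, h3]
  calc (∑ j ∈ Finset.range n, r^j) * r ≤ (1-r)⁻¹ * r :=
        mul_le_mul_of_nonneg_right h4 hr0
    _ = r * (1-r)⁻¹ := by ring

lemma birkhoff_approx {α Cb : ℝ} (hα0 : 0 < α) (hCb : 0 ≤ Cb) {g : (ℕ → A) → ℝ}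
    (hg : ∀ x y, |g x - g y| ≤ Cb * dOmega x y ^ α) (n : ℕ) {x z : ℕ → A}
    (hagree : ∀ k < n, z k = x k) :
    |birkhoff n g z - birkhoff n g x| ≤ Cb * (((1/2:ℝ)^α) * (1 - (1/2:ℝ)^α)⁻¹) := by
  set r := (1/2:ℝ)^α with hr
  have hr0 : 0 < r := Real.rpow_pos_of_pos (by norm_num) α
  have hr1 : r < 1 := Real.rpow_lt_one (by norm_num) (by norm_num) hα0
  have hterm : ∀ i < n, |g (shift^[i] z) - g (shift^[i] x)| ≤ Cb * r^(n-i) := by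
    intro i hi
    have hag2 : ∀ k < n - i, (shift^[i] z) k = (shift^[i] x) k := by
      intro k hk
      rw [shift_iterate_apply, shift_iterate_apply]
      exact hagree (k+i) (by omega)
    have hd : dOmega (shift^[i] z) (shift^[i] x) ≤ (1/2:ℝ)^(n-i) :=
      dOmega_le_of_agree hag2
    have hdα : dOmega (shift^[i] z) (shift^[i] x) ^ α ≤ ((1/2:ℝ)^(n-i))^α :=
      Real.rpow_le_rpow (dOmega_nonneg _ _) hd hα0.le
    rw [half_pow_rpow α (n-i)] at hdα
    calc |g (shift^[i] z) - g (shift^[i] x)|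
        ≤ Cb * dOmega (shift^[i] z) (shift^[i] x) ^ α := hg _ _
      _ ≤ Cb * r^(n-i) := mul_le_mul_of_nonneg_left hdα hCb
  calc |birkhoff n g z - birkhoff n g x|
      = |∑ i ∈ Finset.range n, (g (shift^[i] z) - g (shift^[i] x))| := by
        rw [birkhoff, birkhoff, Finset.sum_sub_distrib]
    _ ≤ ∑ i ∈ Finset.range n, |g (shift^[i] z) - g (shift^[i] x)| :=
        Finset.abs_sum_le_sum_abs _ _
    _ ≤ ∑ i ∈ Finset.range n, Cb * r^(n-i) :=
        Finset.sum_le_sum fun i hi => hterm i (Finset.mem_range.1 hi)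
    _ = Cb * ∑ i ∈ Finset.range n, r^(n-i) := by rw [← Finset.mul_sum]
    _ ≤ Cb * (r * (1-r)⁻¹) :=
        mul_le_mul_of_nonneg_left (geom_tail_sum hr0.le hr1 n) hCb

lemma fbar_holder {α : ℝ} (hα0 : 0 < α) (hα1 : α < 1) {f h : (ℕ → A) → ℝ}
    {lam c Cf Ch : ℝ}
    (hc : 0 < c) (hch : ∀ x, c ≤ h x)
    (hCf : ∀ x y, |f x - f y| ≤ Cf * dOmega x y ^ α)
    (hCh0 : 0 ≤ Ch) (hCh : ∀ x y, |h x - h y| ≤ Ch * dOmega x y ^ α) :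
    ∀ x y, |fbar f h lam x - fbar f h lam y|
      ≤ (Cf + c⁻¹*Ch + 2*(c⁻¹*Ch)) * dOmega x y ^ α := by
  intro x y
  have hd0 := dOmega_nonneg x y
  have hdα : 0 ≤ dOmega x y ^ α := Real.rpow_nonneg hd0 α
  have hcinv : (0:ℝ) ≤ c⁻¹ := inv_nonneg.2 hc.le
  have h1 : |Real.log (h x) - Real.log (h y)| ≤ c⁻¹ * Ch * dOmega x y ^ α := by
    calc |Real.log (h x) - Real.log (h y)| ≤ c⁻¹ * |h x - h y| :=
          log_lipschitz hc (hch x) (hch y)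
      _ ≤ c⁻¹ * (Ch * dOmega x y ^ α) := mul_le_mul_of_nonneg_left (hCh x y) hcinv
      _ = c⁻¹ * Ch * dOmega x y ^ α := by ring
  have h2 : |Real.log (h (shift x)) - Real.log (h (shift y))|
      ≤ 2 * (c⁻¹ * Ch) * dOmega x y ^ α := by
    have hb : dOmega (shift x) (shift y) ^ α ≤ 2 * dOmega x y ^ α := by
      calc dOmega (shift x) (shift y) ^ α ≤ (2 * dOmega x y)^α :=
            Real.rpow_le_rpow (dOmega_nonneg _ _) (dOmega_shift_le x y) hα0.le
        _ = (2:ℝ)^α * dOmega x y ^ α := Real.mul_rpow (by norm_num) hd0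
        _ ≤ 2 * dOmega x y ^ α := by
            have h2a : (2:ℝ)^α ≤ (2:ℝ)^(1:ℝ) :=
              Real.rpow_le_rpow_of_exponent_le (by norm_num) hα1.le
            rw [Real.rpow_one] at h2a
            exact mul_le_mul_of_nonneg_right h2a hdα
    calc |Real.log (h (shift x)) - Real.log (h (shift y))|
        ≤ c⁻¹ * |h (shift x) - h (shift y)| := log_lipschitz hc (hch _) (hch _)
      _ ≤ c⁻¹ * (Ch * dOmega (shift x) (shift y) ^ α) :=
          mul_le_mul_of_nonneg_left (hCh _ _) hcinv
      _ ≤ c⁻¹ * (Ch * (2 * dOmega x y ^ α)) := by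
          apply mul_le_mul_of_nonneg_left _ hcinv
          exact mul_le_mul_of_nonneg_left hb hCh0
      _ = 2 * (c⁻¹ * Ch) * dOmega x y ^ α := by ring
  have hsplit : fbar f h lam x - fbar f h lam y
      = (f x - f y) + (Real.log (h x) - Real.log (h y))
        - (Real.log (h (shift x)) - Real.log (h (shift y))) := by
    unfold fbar; ring
  calc |fbar f h lam x - fbar f h lam y|
      ≤ |f x - f y| + |Real.log (h x) - Real.log (h y)|
        + |Real.log (h (shift x)) - Real.log (h (shift y))| := by
        rw [hsplit]
        have t1 := abs_add_le (f x - f y) (Real.log (h x) - Real.log (h y))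
        have t2 := abs_sub ((f x - f y) + (Real.log (h x) - Real.log (h y)))
          (Real.log (h (shift x)) - Real.log (h (shift y)))
        linarith
    _ ≤ Cf * dOmega x y ^ α + c⁻¹*Ch * dOmega x y ^ α
        + 2*(c⁻¹*Ch) * dOmega x y ^ α := add_le_add (add_le_add (hCf x y) h1) h2
    _ = (Cf + c⁻¹*Ch + 2*(c⁻¹*Ch)) * dOmega x y ^ α := by ring

lemma measurable_proj (n : ℕ) : Measurable (proj n : (ℕ → A) → Fin n → A) :=
  measurable_pi_lambda _ fun i => measurable_pi_apply _

lemma measurable_wordCons_fst (n : ℕ) (y : ℕ → A) :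
    Measurable (fun w : Fin n → A => wordCons n w y) := by
  apply measurable_pi_lambda
  intro i
  by_cases hi : i < n
  · simp only [wordCons, dif_pos hi]
    exact measurable_pi_apply _
  · simp only [wordCons, dif_neg hi]
    exact measurable_const

/-- If `f` is `α`-Hölder and `L_f h = λ h` with `λ > 0` and `h` a strictly
positive `α`-Hölder function, then `h^s(μ) + ∫ f dμ ≤ log λ` for every shift-invariant
Borel probability measure `μ`. -/
theorem statement1
    (p : Measure A) [IsProbabilityMeasure p]
    (hsupp : ∀ U : Set A, IsOpen U → U.Nonempty → 0 < p U)
    (α : ℝ) (hα0 : 0 < α) (hα1 : α < 1)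
    (f : (ℕ → A) → ℝ) (hf : IsHolder α f)
    (lam : ℝ) (hlam : 0 < lam)
    (h : (ℕ → A) → ℝ) (hh : IsHolder α h) (hpos : ∀ x, 0 < h x)
    (heig : ∀ x, ruelle p f h x = lam * h x)
    (μ : Measure (ℕ → A)) [IsProbabilityMeasure μ]
    (hinv : μ.map shift = μ) :
    specEnt p μ + ((∫ x, f x ∂μ : ℝ) : EReal) ≤ ((Real.log lam : ℝ) : EReal) := by
  classical
  -- Nonemptiness
  have hAne : Nonempty A := by
    by_contra hne
    rw [not_nonempty_iff] at hne
    have h1 : p Set.univ = 1 := measure_univ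
    rw [Set.univ_eq_empty_iff.2 hne] at h1
    simp at h1
  have hΩne : Nonempty (ℕ → A) := ⟨fun _ => Classical.arbitrary A⟩
  obtain ⟨y₀⟩ := hΩne
  haveI : Nonempty (ℕ → A) := ⟨y₀⟩
  -- continuity
  have hfc : Continuous f := continuous_of_holder hα0 hf
  have hhc : Continuous h := continuous_of_holder hα0 hh
  obtain ⟨Cf, hCf0, hCf⟩ := hf
  obtain ⟨Ch, hCh0, hCh⟩ := hh
  -- positive lower bound on h
  obtain ⟨x₀, -, hx₀⟩ := isCompact_univ.exists_isMinOn (Set.univ_nonempty)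
    hhc.continuousOn
  obtain ⟨x₁, -, hx₁⟩ := isCompact_univ.exists_isMaxOn (Set.univ_nonempty)
    hhc.continuousOn
  set c := h x₀ with hcdef
  have hc : 0 < c := hpos x₀
  have hch : ∀ x, c ≤ h x := fun x => isMinOn_iff.1 hx₀ x (Set.mem_univ x)
  have hhub : ∀ x, h x ≤ h x₁ := fun x => isMaxOn_iff.1 hx₁ x (Set.mem_univ x)
  -- normalized potential
  set fb := fbar f h lam with hfbdef
  set Cb := Cf + c⁻¹*Ch + 2*(c⁻¹*Ch) with hCbdef
  have hCb0 : 0 ≤ Cb := by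
    have : (0:ℝ) ≤ c⁻¹ := inv_nonneg.2 hc.le
    have h1 : 0 ≤ c⁻¹ * Ch := mul_nonneg this hCh0
    rw [hCbdef]; linarith
  have hfb_hold : ∀ x y, |fb x - fb y| ≤ Cb * dOmega x y ^ α :=
    fbar_holder hα0 hα1 hc hch hCf hCh0 hCh
  set Bf := |fb y₀| + Cb with hBfdef
  have hBf : ∀ x, |fb x| ≤ Bf := bounded_of_holder hα0 y₀ Cb hCb0 hfb_hold
  -- measurability
  have hfm : Measurable f := hfc.measurable
  have hhm : Measurable h := hhc.measurable
  have hlogh : Measurable (fun x => Real.log (h x)) := Real.measurable_log.comp hhm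
  have hfbm : Measurable fb := by
    rw [hfbdef]
    unfold fbar
    exact ((hfm.add hlogh).sub (hlogh.comp measurable_shift)).sub measurable_const
  -- bounds, integrability
  have hlogb : ∀ x, |Real.log (h x)| ≤ |Real.log c| + |Real.log (h x₁)| := by
    intro x
    have l1 : Real.log c ≤ Real.log (h x) := Real.log_le_log hc (hch x)
    have l2 : Real.log (h x) ≤ Real.log (h x₁) := Real.log_le_log (hpos x) (hhub x)
    rw [abs_le]
    constructor
    · have := neg_abs_le (Real.log c)
      have := abs_nonneg (Real.log (h x₁))
      linarith
    · have := le_abs_self (Real.log (h x₁))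
      have := abs_nonneg (Real.log c)
      linarith
  have hBff : ∀ x, |f x| ≤ |f y₀| + Cf := bounded_of_holder hα0 y₀ Cf hCf0 hCf
  have If : Integrable f μ := integrable_of_bdd hfm hBff
  have Ilog : Integrable (fun x => Real.log (h x)) μ := integrable_of_bdd hlogh hlogb
  have Ilogσ : Integrable (fun x => Real.log (h (shift x))) μ :=
    integrable_of_bdd (hlogh.comp measurable_shift) (fun x => hlogb (shift x))
  set I := ∫ x, fb x ∂μ with hIdef
  -- value of I
  have hshift_int : ∫ x, Real.log (h (shift x)) ∂μ = ∫ x, Real.log (h x) ∂μ := by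
    have hmap := integral_map (μ := μ) measurable_shift.aemeasurable
      hlogh.aestronglyMeasurable
    rw [hinv] at hmap
    exact hmap.symm
  have Ia : Integrable (fun x => f x + Real.log (h x)) μ := If.add Ilog
  have Ib : Integrable (fun x => f x + Real.log (h x) - Real.log (h (shift x))) μ :=
    Ia.sub Ilogσ
  have hI : I = ∫ x, f x ∂μ - Real.log lam := by
    rw [hIdef, hfbdef]
    unfold fbar
    rw [integral_sub Ib (integrable_const (Real.log lam)),
      integral_sub Ia Ilogσ, integral_add If Ilog, integral_const,
      hshift_int]
    simp
  -- invariance of iterates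
  have hinv_iter : ∀ i : ℕ, μ.map (fun x => shift^[i] x) = μ := by
    intro i
    induction i with
    | zero => simpa using Measure.map_id
    | succ k ih =>
      have hcomp : (fun x : ℕ → A => shift^[k+1] x)
          = (fun x => shift^[k] x) ∘ shift := by
        funext x; rw [Function.iterate_succ_apply]; rfl
      rw [hcomp, ← Measure.map_map (measurable_shift_iterate k) measurable_shift,
        hinv, ih]
  have hbirk_int : ∀ n : ℕ, ∫ x, birkhoff n fb x ∂μ = n * I := by
    intro n
    unfold birkhoff
    have hInt_i : ∀ i ∈ Finset.range n, Integrable (fun x => fb (shift^[i] x)) μ :=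
      fun i _ => integrable_of_bdd (hfbm.comp (measurable_shift_iterate i))
        (fun x => hBf _)
    rw [integral_finset_sum _ hInt_i]
    have heach : ∀ i : ℕ, ∫ x, fb (shift^[i] x) ∂μ = I := by
      intro i
      have hmap := integral_map (μ := μ) (measurable_shift_iterate i).aemeasurable
        hfbm.aestronglyMeasurable
      rw [hinv_iter i] at hmap
      exact hmap.symm
    rw [Finset.sum_congr rfl (fun i _ => heach i)]
    simp [mul_comm]
  -- the error constant
  set D := Cb * (((1/2:ℝ)^α) * (1 - (1/2:ℝ)^α)⁻¹) with hDdef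
  have hr0 : (0:ℝ) < (1/2:ℝ)^α := Real.rpow_pos_of_pos (by norm_num) α
  have hr1 : (1/2:ℝ)^α < 1 := Real.rpow_lt_one (by norm_num) (by norm_num) hα0
  have hD0 : 0 ≤ D := by
    rw [hDdef]
    have : (0:ℝ) ≤ ((1/2:ℝ)^α) * (1 - (1/2:ℝ)^α)⁻¹ :=
      mul_nonneg hr0.le (inv_nonneg.2 (by linarith))
    exact mul_nonneg hCb0 this
  -- the per-n bound
  have hmain : ∀ n : ℕ, 1 ≤ n →
      ((n : ℝ)⁻¹ : EReal) * finEnt p μ n ≤ (((-I + D / n) : ℝ) : EReal) := by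
    intro n hn
    have hn0 : (0:ℝ) < n := by exact_mod_cast hn
    set μn := μ.map (proj n) with hμn
    set Pn : Measure (Fin n → A) := Measure.pi fun _ : Fin n => p with hPn
    haveI : IsProbabilityMeasure μn :=
      Measure.isProbabilityMeasure_map (measurable_proj n).aemeasurable
    set g : (Fin n → A) → ℝ := fun w => birkhoff n fb (wordCons n w y₀) with hgdef
    have hgm : Measurable g :=
      (measurable_birkhoff hfbm n).comp (measurable_wordCons_fst n y₀)
    have hgb : ∀ w, |g w| ≤ n * Bf := fun w => abs_birkhoff_le hBf n _
    have hZ : ∫ w, Real.exp (g w) ∂Pn =  1 :=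
      partition_one p hlam hpos heig hfbm hBf n y₀
    have Int_birk : Integrable (birkhoff n fb) μ :=
      integrable_of_bdd (measurable_birkhoff hfbm n) (abs_birkhoff_le hBf n)
    have hgproj : ∫ w, g w ∂μn = ∫ x, g (proj n x) ∂μ := by
      rw [hμn, integral_map (measurable_proj n).aemeasurable hgm.aestronglyMeasurable]
    have hptw : ∀ x, birkhoff n fb x - D ≤ g (proj n x) := by
      intro x
      have hag : ∀ k < n, wordCons n (proj n x) y₀ k = x k := by
        intro k hk
        simp [wordCons, proj, dif_pos hk]
      have happ := birkhoff_approx hα0 hCb0 hfb_hold n hag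
      rw [← hDdef] at happ
      have := (abs_le.1 happ).1
      have hgx : g (proj n x) = birkhoff n fb (wordCons n (proj n x) y₀) := rfl
      rw [hgx]
      linarith
    have hIg : (n:ℝ) * I - D ≤ ∫ w, g w ∂μn := by
      rw [hgproj]
      have hmono : ∫ x, (birkhoff n fb x - D) ∂μ ≤ ∫ x, g (proj n x) ∂μ :=
        integral_mono (Int_birk.sub (integrable_const D))
          (integrable_of_bdd (hgm.comp (measurable_proj n)) (fun x => hgb _)) hptw
      rw [integral_sub Int_birk (integrable_const D), hbirk_int n,
        integral_const] at hmono
      simp only [measure_univ, probReal_univ, smul_eq_mul, one_mul] at hmono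
      linarith
    -- case split on relative entropy being finite
    show ((n : ℝ)⁻¹ : EReal) * (- relEnt μn Pn) ≤ (((-I + D / n) : ℝ) : EReal)
    rw [relEnt]
    split_ifs with hcond
    · obtain ⟨hac, hint⟩ := hcond
      have hgibbs := gibbs_ineq μn Pn hac hint hgm hgb hZ
      set R := ∫ x, Real.log ((μn.rnDeriv Pn) x).toReal ∂μn with hRdef
      have hR : (n:ℝ)*I - D ≤ R := le_trans hIg hgibbs
      rw [← EReal.coe_neg, ← EReal.coe_inv, ← EReal.coe_mul, EReal.coe_le_coe_iff]
      have t1 : (n:ℝ)⁻¹ * (-R) ≤ (n:ℝ)⁻¹ * (D - n*I) :=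
        mul_le_mul_of_nonneg_left (by linarith) (by positivity)
      have t2 : (n:ℝ)⁻¹ * (D - n*I) = -I + D/n := by
        field_simp
        ring
      linarith
    · rw [EReal.neg_top, ← EReal.coe_inv, EReal.coe_mul_bot_of_pos (by positivity)]
      exact bot_le
  -- limsup
  have hev : ∀ᶠ n : ℕ in atTop,
      ((n:ℝ)⁻¹ : EReal) * finEnt p μ n ≤ (((-I + D/(n:ℝ)):ℝ):EReal) :=
    eventually_atTop.2 ⟨1, fun n hn => hmain n hn⟩
  have htend : Tendsto (fun n : ℕ => ((-I + D/(n:ℝ) : ℝ) : EReal)) atTop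
      (𝓝 ((-I : ℝ) : EReal)) := by
    rw [EReal.tendsto_coe]
    have ht := (tendsto_const_nhds (x := -I) (f := atTop (α := ℕ))).add
      (tendsto_const_div_atTop_nhds_zero_nat D)
    simpa using ht
  have hlimsup : specEnt p μ ≤ ((-I : ℝ) : EReal) := by
    rw [specEnt]
    calc Filter.atTop.limsup (fun n : ℕ => ((n:ℝ)⁻¹ : EReal) * finEnt p μ n)
        ≤ Filter.atTop.limsup (fun n : ℕ => (((-I + D/(n:ℝ)):ℝ):EReal)) :=
          limsup_le_limsup hev
      _ = ((-I:ℝ):EReal) := htend.limsup_eq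
  calc specEnt p μ + ((∫ x, f x ∂μ : ℝ) : EReal)
      ≤ ((-I:ℝ):EReal) + ((∫ x, f x ∂μ : ℝ):EReal) := add_le_add_left hlimsup _
    _ = ((-I + ∫ x, f x ∂μ : ℝ) : EReal) := (EReal.coe_add _ _).symm
    _ = ((Real.log lam : ℝ) : EReal) := by
        congr 1
        rw [hI]
        ring

end Paper
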